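/- For every natural number m, b(m) = binom(1/2, m) · Σ_{k=0}^{m} [ ((1−m)/2)_k · (−m/2)_k / ( (3/2 − m)_k · k! ) ] · (1/9)^k, where all Pochhammer symbols are evaluated in ℝ (note (3/2 − m)_k ≠ 0 for all k, m ∈ ℕ). -/

import Mathlib

open Finset


lemma poch_eval (x : ℝ) (k : ℕ) :
    Polynomial.eval x (ascPochhammer ℝ k) = ∏ j ∈ range k, (x + j) := by
  induction k with
  | zero => simp
  | succ n ih => rw [ascPochhammer_succ_right, prod_range_succ, ← ih]; simp [mul_comm]

lemma AB4 (m k : ℕ) :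
    (∏ j ∈ range k, ((1 - (m:ℝ))/2 + j)) * (∏ j ∈ range k, (-(m:ℝ)/2 + j)) * 4 ^ k
      = ∏ t ∈ range (2*k), ((m:ℝ) - t) := by
  induction k with
  | zero => simp
  | succ n ih =>
    have h2 : 2 * (n+1) = (2*n) + 1 + 1 := by ring
    rw [h2, prod_range_succ, prod_range_succ, prod_range_succ, prod_range_succ, ← ih]
    push_cast
    ring

lemma prod_fact (m : ℕ) : ∀ j ≤ m, (∏ t ∈ range j, ((m:ℝ) - t)) * ((m - j).factorial : ℝ)
    = (m.factorial : ℝ) := by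
  intro j
  induction j with
  | zero => simp
  | succ n ih =>
    intro h
    have hn : n ≤ m := Nat.le_of_succ_le h
    rw [prod_range_succ, ← ih hn]
    have h1 : m - n = (m - (n+1)) + 1 := by omega
    have h2 : ((m:ℝ) - n) = (((m - (n+1) : ℕ) : ℝ) + 1) := by
      have : ((m - (n+1) : ℕ) : ℝ) = (m:ℝ) - (n+1) := by
        push_cast [Nat.cast_sub h]; ring
      rw [this]; ring
    rw [h1, Nat.factorial_succ, h2]
    push_cast
    ring

lemma P_split (m k : ℕ) (hk : k ≤ m) :
    (∏ i ∈ range m, ((1:ℝ)/2 - i))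
      = (∏ i ∈ range (m - k), ((1:ℝ)/2 - i)) * ∏ j ∈ range k, (3/2 - (m:ℝ) + j) := by
  have hm : m = (m - k) + k := by omega
  conv_lhs => rw [hm, prod_range_add]
  congr 1
  rw [← prod_range_reflect (fun j => (3/2 - (m:ℝ) + j)) k]
  apply prod_congr rfl
  intro j hj
  simp only [mem_range] at hj
  have h1 : ((m - k + j : ℕ) : ℝ) = (m:ℝ) - k + j := by
    push_cast [Nat.cast_sub hk]; ring
  have h2 : ((k - 1 - j : ℕ) : ℝ) = (k:ℝ) - 1 - j := by
    have h3 : k - 1 - j = k - (1 + j) := by omega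
    rw [h3, Nat.cast_sub (by omega)]; push_cast; ring
  rw [h1, h2]
  ring

lemma C_ne (m k : ℕ) : (∏ j ∈ range k, (3/2 - (m:ℝ) + j)) ≠ 0 := by
  apply prod_ne_zero_iff.mpr
  intro j _
  intro h
  have h2 : ((2*m : ℕ) : ℝ) = ((3 + 2*j : ℕ) : ℝ) := by push_cast; linarith
  have h3 : 2*m = 3 + 2*j := Nat.cast_injective h2
  omega

lemma AB_zero (m k : ℕ) (h : m < 2*k) :
    (∏ j ∈ range k, ((1 - (m:ℝ))/2 + j)) * (∏ j ∈ range k, (-(m:ℝ)/2 + j)) = 0 := by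
  rcases Nat.even_or_odd m with ⟨q, hq⟩ | ⟨q, hq⟩
  · apply mul_eq_zero_of_right
    apply prod_eq_zero (i := q) (mem_range.mpr (by omega))
    subst hq; push_cast; ring
  · apply mul_eq_zero_of_left
    apply prod_eq_zero (i := q) (mem_range.mpr (by omega))
    subst hq; push_cast; ring


/-- The generalized binomial coefficient `binom(x, n) = (∏_{i=0}^{n-1} (x - i)) / n!`. -/
noncomputable def gbinom (x : ℝ) (n : ℕ) : ℝ :=
  (∏ i ∈ Finset.range n, (x - i)) / n.factorial

/-- `b m = ∑_{k=0}^{m} binom(1/2, m-k) ⬝ binom(m-k, k) ⬝ 36^(-k)`. -/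
noncomputable def b (m : ℕ) : ℝ :=
  ∑ k ∈ Finset.range (m + 1),
    gbinom (1 / 2) (m - k) * ((m - k).choose k : ℝ) * (1 / 36 : ℝ) ^ k

theorem stmt4 (m : ℕ) :
    b m = gbinom (1 / 2) m *
      ∑ k ∈ Finset.range (m + 1),
        (Polynomial.eval ((1 - (m : ℝ)) / 2) (ascPochhammer ℝ k) *
          Polynomial.eval (-(m : ℝ) / 2) (ascPochhammer ℝ k) /
          (Polynomial.eval (3 / 2 - (m : ℝ)) (ascPochhammer ℝ k) * (k.factorial : ℝ))) *
        (1 / 9 : ℝ) ^ k := by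
  rw [b, Finset.mul_sum]
  apply Finset.sum_congr rfl
  intro k hk
  have hkm : k ≤ m := by simp only [mem_range] at hk; omega
  have hA : Polynomial.eval ((1 - (m : ℝ)) / 2) (ascPochhammer ℝ k)
      = ∏ j ∈ range k, ((1 - (m:ℝ))/2 + j) := poch_eval _ _
  have hB : Polynomial.eval (-(m : ℝ) / 2) (ascPochhammer ℝ k)
      = ∏ j ∈ range k, (-(m:ℝ)/2 + j) := poch_eval _ _
  have hC : Polynomial.eval (3 / 2 - (m : ℝ)) (ascPochhammer ℝ k)
      = ∏ j ∈ range k, (3/2 - (m:ℝ) + j) := poch_eval _ _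
  rw [hA, hB, hC, gbinom, gbinom]
  by_cases hd : 2*k ≤ m
  · -- main case
    set A := ∏ j ∈ range k, ((1 - (m:ℝ))/2 + j) with hAdef
    set B := ∏ j ∈ range k, (-(m:ℝ)/2 + j) with hBdef
    set C := ∏ j ∈ range k, (3/2 - (m:ℝ) + j) with hCdef
    set P1 := ∏ i ∈ range (m - k), ((1:ℝ)/2 - i) with hP1def
    have hP : (∏ i ∈ range m, ((1:ℝ)/2 - i)) = P1 * C := P_split m k hkm
    have hAB : A * B * 4 ^ k = ∏ t ∈ range (2*k), ((m:ℝ) - t) := AB4 m k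
    have hR : (∏ t ∈ range (2*k), ((m:ℝ) - t)) * ((m - 2*k).factorial : ℝ)
        = (m.factorial : ℝ) := prod_fact m (2*k) hd
    have hchn : (m-k).choose k * k.factorial * (m - 2*k).factorial = (m-k).factorial := by
      have := Nat.choose_mul_factorial_mul_factorial (show k ≤ m - k by omega)
      rwa [show m - k - k = m - 2*k by omega] at this
    have hch : ((m-k).choose k : ℝ) * (k.factorial : ℝ) * ((m - 2*k).factorial : ℝ)
        = ((m-k).factorial : ℝ) := by exact_mod_cast hchn
    have hCne : C ≠ 0 := C_ne m k
    have hf1 : ((m-k).factorial : ℝ) ≠ 0 := Nat.cast_ne_zero.mpr (Nat.factorial_ne_zero _)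
    have hf2 : (m.factorial : ℝ) ≠ 0 := Nat.cast_ne_zero.mpr (Nat.factorial_ne_zero _)
    have hf3 : (k.factorial : ℝ) ≠ 0 := Nat.cast_ne_zero.mpr (Nat.factorial_ne_zero _)
    have hf4 : ((m - 2*k).factorial : ℝ) ≠ 0 := Nat.cast_ne_zero.mpr (Nat.factorial_ne_zero _)
    have h36 : ((1:ℝ)/36) ^ k = (1/9)^k * (1/4)^k := by rw [← mul_pow]; norm_num
    rw [hP, h36]
    field_simp
    have h4 : ((1:ℝ)/4)^k * 4^k = 1 := by rw [← mul_pow]; norm_num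
    linear_combination (P1*A*B) * hch
      + (-(P1*(((m-k).choose k : ℕ):ℝ)*(k.factorial:ℝ)*(1/4)^k*(((m-2*k).factorial:ℕ):ℝ))) * hAB
      + (-(P1*(((m-k).choose k : ℕ):ℝ)*(k.factorial:ℝ)*(1/4)^k)) * hR
      + (P1*(((m-k).choose k : ℕ):ℝ)*(k.factorial:ℝ)*(((m-2*k).factorial:ℕ):ℝ)*A*B) * h4
  · -- degenerate case
    have hch0 : (m - k).choose k = 0 := Nat.choose_eq_zero_of_lt (by omega)
    rw [hch0, AB_zero m k (by omega)]
    simp
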